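/- Let p ∈ ℤⁿ_{++} and r ∈ ℤⁿ, and let A be the (n+1)×n integer matrix whose first row is a = pM + r and whose remaining rows form the n×n identity. For every k ∈ {1,…,n−1}, the k-th successive minimum of the lattice generated by the columns of A satisfies Λ_k(L(A)) ≤ (‖r‖ + 1)·Λ_k(N(p)), where N(p) = {w ∈ ℤⁿ : p·w = 0}. -/

import Mathlib

/-- Euclidean norm of an integer vector. -/
noncomputable def intEnorm {n : ℕ} (v : Fin n → ℤ) : ℝ :=
  Real.sqrt (∑ i, ((v i : ℝ)) ^ 2)

/-- Successive minima bound for the rangespace lattice: if `A` is the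
`(n+1)×n` matrix with first row `a = pM + r` and identity below, then
`Λ_k(L(A)) ≤ (‖r‖+1)·Λ_k(N(p))`: any `k` linearly independent vectors of
`N(p) = {w : pw = 0}` of norm at most `t` yield `k` linearly independent
vectors of the lattice generated by the columns of `A` of norm at most
`(‖r‖+1)t`. -/
theorem succ_min_rangespace (n : ℕ) (p r : Fin n → ℤ) (hp : ∀ i, 0 < p i)
    (M : ℤ) (k : ℕ) (hk1 : 1 ≤ k) (hk2 : k ≤ n - 1)
    (A : Matrix (Fin (n + 1)) (Fin n) ℤ)
    (hA0 : ∀ j, A 0 j = p j * M + r j)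
    (hAI : ∀ (i : Fin n) (j : Fin n), A i.succ j = if i = j then 1 else 0) :
    ∀ t : ℝ,
      (∃ w : Fin k → (Fin n → ℤ), LinearIndependent ℤ w ∧
        (∀ l, ∑ i, p i * w l i = 0) ∧ (∀ l, intEnorm (w l) ≤ t)) →
      ∃ v : Fin k → (Fin (n + 1) → ℤ), LinearIndependent ℤ v ∧
        (∀ l, ∃ x : Fin n → ℤ, v l = A.mulVec x) ∧
        (∀ l, intEnorm (v l) ≤ (intEnorm r + 1) * t) := by
  rintro t ⟨w, hli, hker, hnorm⟩
  -- key computations on mulVec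
  have hsucc : ∀ (x : Fin n → ℤ) (i : Fin n), A.mulVec x i.succ = x i := by
    intro x i
    simp [Matrix.mulVec, dotProduct, hAI]
  have hzero : ∀ (x : Fin n → ℤ), (∑ i, p i * x i = 0) →
      A.mulVec x 0 = ∑ j, r j * x j := by
    intro x hx
    have : A.mulVec x 0 = ∑ j, (p j * M + r j) * x j := by
      simp [Matrix.mulVec, dotProduct, hA0]
    rw [this]
    have : ∑ j, (p j * M + r j) * x j
        = M * (∑ j, p j * x j) + ∑ j, r j * x j := by
      rw [Finset.mul_sum, ← Finset.sum_add_distrib]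
      exact Finset.sum_congr rfl (fun j _ => by ring)
    rw [this, hx]; ring
  refine ⟨fun l => A.mulVec (w l), ?_, fun l => ⟨w l, rfl⟩, ?_⟩
  · -- linear independence
    have hinj : Function.Injective A.mulVecLin := by
      intro x y hxy
      funext i
      have := congrFun hxy i.succ
      simpa [hsucc] using this
    have := hli.map' A.mulVecLin (LinearMap.ker_eq_bot.mpr hinj)
    exact this
  · intro l
    have ht0 : 0 ≤ t := le_trans (Real.sqrt_nonneg _) (hnorm ⟨0, hk1⟩)
    set R : ℝ := ∑ i, ((r i : ℝ)) ^ 2 with hR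
    set S : ℝ := ∑ i, ((w l i : ℝ)) ^ 2 with hS
    have hRnn : 0 ≤ R := Finset.sum_nonneg fun _ _ => sq_nonneg _
    have hSnn : 0 ≤ S := Finset.sum_nonneg fun _ _ => sq_nonneg _
    -- Cauchy-Schwarz
    have hcs : (∑ j, (r j : ℝ) * (w l j : ℝ)) ^ 2 ≤ R * S :=
      Finset.sum_mul_sq_le_sq_mul_sq Finset.univ _ _
    have hsq : ∑ i, ((A.mulVec (w l) i : ℝ)) ^ 2
        = ((∑ j, r j * w l j : ℤ) : ℝ) ^ 2 + S := by
      rw [Fin.sum_univ_succ, hzero (w l) (hker l)]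
      congr 1
      simp [hsucc, hS]
    have hcast : ((∑ j, r j * w l j : ℤ) : ℝ) = ∑ j, (r j : ℝ) * (w l j : ℝ) := by
      push_cast; rfl
    have hbound : ∑ i, ((A.mulVec (w l) i : ℝ)) ^ 2
        ≤ (Real.sqrt R + 1) ^ 2 * S := by
      rw [hsq, hcast]
      have h1 : (Real.sqrt R + 1) ^ 2 * S = R * S + (2 * Real.sqrt R + 1) * S := by
        have : Real.sqrt R ^ 2 = R := Real.sq_sqrt hRnn
        nlinarith [this]
      rw [h1]
      have h2 : S ≤ (2 * Real.sqrt R + 1) * S := by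
        nlinarith [Real.sqrt_nonneg R]
      linarith [hcs]
    have h3 : intEnorm (A.mulVec (w l)) ≤ (Real.sqrt R + 1) * Real.sqrt S := by
      unfold intEnorm
      calc Real.sqrt (∑ i, ((A.mulVec (w l) i : ℝ)) ^ 2)
          ≤ Real.sqrt ((Real.sqrt R + 1) ^ 2 * S) := Real.sqrt_le_sqrt hbound
        _ = (Real.sqrt R + 1) * Real.sqrt S := by
            rw [Real.sqrt_mul (sq_nonneg _), Real.sqrt_sq (by positivity)]
    calc intEnorm (A.mulVec (w l)) ≤ (Real.sqrt R + 1) * Real.sqrt S := h3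
      _ ≤ (Real.sqrt R + 1) * t := by
          apply mul_le_mul_of_nonneg_left (hnorm l) (by positivity)
      _ = (intEnorm r + 1) * t := by rw [intEnorm]
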